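/- arXiv:2011.09093 — 3 statements merged into one kernel-verified Lean document; each statement's English description precedes it below -/
import Mathlib

section
/- For any constant 0 < ε ≤ 1/8 and any n ∈ ℕ, there exists a matrix A ∈ F^{n×n} over a finite field F that is an (εn, εn)-rigid matrix, i.e., A cannot be written as A = B + C where B has rank at most εn and C has at most εn non-zero entries in each row. -/
/-- A matrix `A` is `(r, s)`-rigid if it cannot be written as `A = B + C` where `B` has
rank at most `r` and `C` has at most `s` non-zero entries in each row. -/
def IsRigidMatrix {F : Type*} [Field F] [DecidableEq F] {n : ℕ}
    (A : Matrix (Fin n) (Fin n) F) (r s : ℝ) : Prop :=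
  ¬ ∃ B C : Matrix (Fin n) (Fin n) F, A = B + C ∧ (B.rank : ℝ) ≤ r ∧
      ∀ i, ((Finset.univ.filter fun j => C i j ≠ 0).card : ℝ) ≤ s

open Matrix Finset

lemma key_arith (q n r s N : ℕ) (hq : 2 ≤ q) (hn : 0 < n) (hr : 8 * r ≤ n) (hs : 8 * s ≤ n)
    (hN : N * 7 ^ (n - s) ≤ 8 ^ n) : N * q ^ s < q ^ (n - 2 * r) := by
  have step1 : (8 : ℕ) ^ n < 2 ^ (n - 2 * r - s) * 7 ^ (n - s) := by
    have h8 : ((8 : ℕ) ^ n) ^ 8 < (2 ^ (n - 2 * r - s) * 7 ^ (n - s)) ^ 8 := by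
      have l1 : ((8 : ℕ) ^ n) ^ 8 = (8 ^ 8) ^ n := by
        rw [← pow_mul, ← pow_mul, Nat.mul_comm]
      have l2 : ((2 : ℕ) ^ (n - 2 * r - s) * 7 ^ (n - s)) ^ 8
          = 2 ^ (8 * (n - 2 * r - s)) * 7 ^ (8 * (n - s)) := by
        rw [mul_pow, ← pow_mul, ← pow_mul, Nat.mul_comm (n - 2*r - s) 8, Nat.mul_comm (n-s) 8]
      have l3 : (2 : ℕ) ^ (5 * n) * 7 ^ (7 * n) ≤ 2 ^ (8 * (n - 2 * r - s)) * 7 ^ (8 * (n - s)) :=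
        Nat.mul_le_mul (Nat.pow_le_pow_right (by norm_num) (by omega))
          (Nat.pow_le_pow_right (by norm_num) (by omega))
      have l4 : ((8 : ℕ) ^ 8) ^ n < (2 ^ 5 * 7 ^ 7) ^ n :=
        Nat.pow_lt_pow_left (by norm_num) (by omega)
      have l5 : ((2 : ℕ) ^ 5 * 7 ^ 7) ^ n = 2 ^ (5 * n) * 7 ^ (7 * n) := by
        rw [mul_pow, ← pow_mul, ← pow_mul]
      omega
    exact lt_of_pow_lt_pow_left₀ 8 (by positivity) h8
  have step2 : N < 2 ^ (n - 2 * r - s) := by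
    have := lt_of_le_of_lt hN step1
    exact Nat.lt_of_mul_lt_mul_right this
  calc N * q ^ s < 2 ^ (n - 2 * r - s) * q ^ s :=
        mul_lt_mul_of_pos_right step2 (Nat.pow_pos (by omega))
    _ ≤ q ^ (n - 2 * r - s) * q ^ s :=
        Nat.mul_le_mul_right _ (Nat.pow_le_pow_left hq _)
    _ = q ^ (n - 2 * r) := by rw [← pow_add]; congr 1; omega

lemma exists_factorization {F : Type*} [Field F] {n r : ℕ}
    (B : Matrix (Fin n) (Fin n) F) (h : B.rank ≤ r) :
    ∃ (P : Matrix (Fin n) (Fin r) F) (Q : Matrix (Fin r) (Fin n) F), B = P * Q := by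
  classical
  set W := LinearMap.range B.mulVecLin with hW
  have hd : Module.finrank F W ≤ r := h
  set d := Module.finrank F W with hdd
  let b : Module.Basis (Fin d) F W := Module.finBasis F W
  let g : Fin r → (Fin n → F) := fun k =>
    if hk : (k : ℕ) < d then (b ⟨k, hk⟩ : Fin n → F) else 0
  have hcol : ∀ j, (fun i => B i j) ∈ W := by
    intro j
    exact ⟨Pi.single j 1, by simp [Matrix.mulVecLin_apply]; rfl⟩
  have hspan : ∀ x ∈ W, x ∈ Submodule.span F (Set.range g) := by
    intro x hx
    have h1 : Submodule.map W.subtype ⊤ ≤ Submodule.span F (Set.range g) := by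
      rw [← b.span_eq, Submodule.map_span, ← Set.range_comp]
      apply Submodule.span_mono
      rintro _ ⟨k, rfl⟩
      refine ⟨⟨(k : ℕ), lt_of_lt_of_le k.isLt hd⟩, ?_⟩
      simp only [g]
      rw [dif_pos k.isLt]
      congr
    exact h1 ⟨⟨x, hx⟩, trivial, rfl⟩
  have hco : ∀ j, ∃ c : Fin r → F, ∑ k, c k • g k = fun i => B i j := by
    intro j
    exact (Submodule.mem_span_range_iff_exists_fun F).mp (hspan _ (hcol j))
  choose c hc using hco
  refine ⟨fun i k => g k i, fun k j => c j k, ?_⟩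
  ext i j
  have := congrFun (hc j) i
  simp only [Finset.sum_apply, Pi.smul_apply, smul_eq_mul] at this
  show B i j = ∑ k, g k i * c j k
  rw [← this]
  exact Finset.sum_congr rfl fun k _ => mul_comm _ _

lemma binom_bound (n s : ℕ) (hs : s ≤ n) :
    (∑ k ∈ Finset.range (s + 1), n.choose k) * 7 ^ (n - s) ≤ 8 ^ n := by
  have h1 : (∑ k ∈ Finset.range (s + 1), n.choose k) * 7 ^ (n - s)
      ≤ ∑ k ∈ Finset.range (s + 1), n.choose k * 7 ^ (n - k) := by
    rw [Finset.sum_mul]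
    apply Finset.sum_le_sum
    intro k hk
    have hk' : k ≤ s := Nat.lt_succ_iff.mp (Finset.mem_range.mp hk)
    exact Nat.mul_le_mul_left _ (Nat.pow_le_pow_right (by norm_num) (by omega))
  have h2 : ∑ k ∈ Finset.range (s + 1), n.choose k * 7 ^ (n - k)
      ≤ ∑ k ∈ Finset.range (n + 1), n.choose k * 7 ^ (n - k) :=
    Finset.sum_le_sum_of_subset (Finset.range_subset_range.mpr (by omega))
  have h3 : (8 : ℕ) ^ n = ∑ k ∈ Finset.range (n + 1), 1 ^ k * 7 ^ (n - k) * n.choose k := by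
    have := add_pow (1 : ℕ) 7 n
    norm_num at this
    rw [this]
    exact Finset.sum_congr rfl fun k _ => by ring
  calc _ ≤ _ := h1
    _ ≤ _ := h2
    _ = 8 ^ n := by rw [h3]; exact Finset.sum_congr rfl fun k _ => by ring

lemma card_small_subsets (n s : ℕ) :
    Fintype.card {t : Finset (Fin n) // t.card ≤ s} ≤ ∑ k ∈ Finset.range (s + 1), n.choose k := by
  classical
  rw [Fintype.card_subtype]
  have hsub : Finset.univ.filter (fun t : Finset (Fin n) => t.card ≤ s)
      ⊆ (Finset.range (s + 1)).biUnion (fun k => Finset.powersetCard k Finset.univ) := by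
    intro t ht
    simp only [Finset.mem_filter, Finset.mem_biUnion, Finset.mem_range,
      Finset.mem_powersetCard] at *
    exact ⟨t.card, by omega, Finset.subset_univ t, rfl⟩
  calc _ ≤ _ := Finset.card_le_card hsub
    _ ≤ ∑ k ∈ Finset.range (s + 1), (Finset.powersetCard k (Finset.univ : Finset (Fin n))).card :=
        Finset.card_biUnion_le
    _ = _ := by
        apply Finset.sum_congr rfl
        intro k _
        rw [Finset.card_powersetCard, Finset.card_univ, Fintype.card_fin]

lemma not_all_decomposable {F : Type*} [Field F] [Fintype F] [DecidableEq F] {n r s : ℕ}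
    (hn : 0 < n) (hr : 8 * r ≤ n) (hs : 8 * s ≤ n)
    (h : ∀ A : Matrix (Fin n) (Fin n) F, ∃ B C, A = B + C ∧ B.rank ≤ r ∧
      ∀ i, (Finset.univ.filter fun j => C i j ≠ 0).card ≤ s) : False := by
  classical
  set q := Fintype.card F with hqdef
  have hq : 2 ≤ q := Fintype.one_lt_card
  choose Bf Cf hBC hrk hsp using h
  choose P Q hPQ using fun A => exists_factorization (Bf A) (hrk A)
  let SubT := {t : Finset (Fin n) // t.card ≤ s}
  let Sig := Σ t : SubT, (↥(t.1) → F)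
  let Enc := (Matrix (Fin n) (Fin r) F × Matrix (Fin r) (Fin n) F) × (Fin n → Sig)
  let enc : Matrix (Fin n) (Fin n) F → Enc := fun A =>
    ((P A, Q A), fun i => ⟨⟨Finset.univ.filter (fun j => Cf A i j ≠ 0), hsp A i⟩,
      fun j => Cf A i j.1⟩)
  let dec : Enc → Matrix (Fin n) (Fin n) F := fun e =>
    e.1.1 * e.1.2 +
      Matrix.of (fun i j => if hj : j ∈ (e.2 i).1.1 then (e.2 i).2 ⟨j, hj⟩ else 0)
  have hli : Function.LeftInverse dec enc := by
    intro A
    have hC : (Matrix.of fun i j =>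
        if hj : j ∈ ((enc A).2 i).1.1 then ((enc A).2 i).2 ⟨j, hj⟩ else 0) = Cf A := by
      ext i j
      by_cases hj : Cf A i j = 0 <;> simp [enc, Matrix.of_apply, hj]
    show (P A) * (Q A) + _ = A
    rw [hC, ← hPQ A, ← hBC A]
  have hcard := Fintype.card_le_of_injective enc hli.injective
  -- cardinalities
  have cMnn : Fintype.card (Matrix (Fin n) (Fin n) F) = q ^ (n * n) := by
    show Fintype.card (Fin n → Fin n → F) = q ^ (n * n)
    rw [Fintype.card_fun, Fintype.card_fun, Fintype.card_fin, ← pow_mul]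
  have cMnr : Fintype.card (Matrix (Fin n) (Fin r) F) = q ^ (r * n) := by
    show Fintype.card (Fin n → Fin r → F) = q ^ (r * n)
    rw [Fintype.card_fun, Fintype.card_fun, Fintype.card_fin, Fintype.card_fin, ← pow_mul]
  have cMrn : Fintype.card (Matrix (Fin r) (Fin n) F) = q ^ (n * r) := by
    show Fintype.card (Fin r → Fin n → F) = q ^ (n * r)
    rw [Fintype.card_fun, Fintype.card_fun, Fintype.card_fin, Fintype.card_fin, ← pow_mul]
  set N := Fintype.card SubT with hNdef
  have hSig : Fintype.card Sig ≤ N * q ^ s := by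
    rw [Fintype.card_sigma]
    calc ∑ t : SubT, Fintype.card (↥(t.1) → F) ≤ ∑ _t : SubT, q ^ s := by
          apply Finset.sum_le_sum
          intro t _
          rw [Fintype.card_fun, Fintype.card_coe]
          exact Nat.pow_le_pow_right Fintype.card_pos t.2
      _ = N * q ^ s := by rw [Finset.sum_const, Finset.card_univ, smul_eq_mul]
  have hEnc : Fintype.card Enc = q ^ (r * n) * q ^ (n * r) * (Fintype.card Sig) ^ n := by
    rw [show Fintype.card Enc = Fintype.card (Matrix (Fin n) (Fin r) F)
        * Fintype.card (Matrix (Fin r) (Fin n) F) * Fintype.card (Fin n → Sig) by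
      rw [Fintype.card_prod, Fintype.card_prod, mul_assoc]]
    rw [cMnr, cMrn, Fintype.card_fun, Fintype.card_fin]
  have hNbound : N * 7 ^ (n - s) ≤ 8 ^ n :=
    le_trans (Nat.mul_le_mul_right _ (card_small_subsets n s)) (binom_bound n s (by omega))
  have hkey : N * q ^ s < q ^ (n - 2 * r) := key_arith q n r s N hq hn hr hs hNbound
  have hSigLt : Fintype.card Sig < q ^ (n - 2 * r) := lt_of_le_of_lt hSig hkey
  have hfinal : Fintype.card Enc < q ^ (n * n) := by
    rw [hEnc]
    calc q ^ (r * n) * q ^ (n * r) * (Fintype.card Sig) ^ n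
        < q ^ (r * n) * q ^ (n * r) * (q ^ (n - 2 * r)) ^ n := by
          exact mul_lt_mul_of_pos_left (Nat.pow_lt_pow_left hSigLt (by omega)) (by positivity)
      _ = q ^ (r * n + n * r + (n - 2 * r) * n) := by
          rw [← pow_mul, ← pow_add, ← pow_add]
      _ = q ^ (n * n) := by
          congr 1
          have h2 : 2 * r ≤ n := by omega
          have e1 : (n - 2 * r) * n = n * n - 2 * r * n := Nat.sub_mul n (2 * r) n
          have e2 : 2 * r * n ≤ n * n := Nat.mul_le_mul_right n h2
          have e3 : 2 * r * n = 2 * (r * n) := by ring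
          have e4 : n * r = r * n := Nat.mul_comm n r
          omega
  rw [cMnn] at hcard
  omega

theorem stmt_0 {F : Type*} [Field F] [Fintype F] [DecidableEq F]
    (ε : ℝ) (hε : 0 < ε) (hε' : ε ≤ 1 / 8) (n : ℕ) (hn : 0 < n) :
    ∃ A : Matrix (Fin n) (Fin n) F, IsRigidMatrix A (ε * n) (ε * n) := by
  by_contra hcon
  push_neg at hcon
  have h : ∀ A : Matrix (Fin n) (Fin n) F, ∃ B C, A = B + C ∧ (B.rank : ℝ) ≤ ε * n ∧
      ∀ i, ((Finset.univ.filter fun j => C i j ≠ 0).card : ℝ) ≤ ε * n :=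
    fun A => not_not.mp (hcon A)
  set r := ⌊ε * (n : ℝ)⌋₊ with hrdef
  have hrn : (r : ℝ) ≤ ε * n := Nat.floor_le (by positivity)
  have hr8 : 8 * r ≤ n := by
    have h2 : ε * n ≤ (n : ℝ) / 8 := by
      have := mul_le_mul_of_nonneg_right hε' (by positivity : (0:ℝ) ≤ (n:ℝ))
      linarith
    have : (8 * r : ℝ) ≤ (n : ℝ) := by
      linarith
    exact_mod_cast this
  have h' : ∀ A : Matrix (Fin n) (Fin n) F, ∃ B C, A = B + C ∧ B.rank ≤ r ∧
      ∀ i, (Finset.univ.filter fun j => C i j ≠ 0).card ≤ r := by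
    intro A
    obtain ⟨B, C, hBC, hrk, hsp⟩ := h A
    exact ⟨B, C, hBC, Nat.le_floor hrk, fun i => Nat.le_floor (hsp i)⟩
  exact not_all_decomposable hn hr8 hr8 h'
end

section
/- For every constant 0 < ε ≤ 1/8 and every sufficiently large n (in particular n ≥ 2/ε), there exists a function f : {0,1}^n → {0,1}^n that is an (εn, εn)-rigid function. -/
lemma aux_two_pow (k : ℕ) : k ≤ 2^k := (Nat.lt_two_pow_self (n := k)).le

lemma aux_pow_add2 (a : ℕ) : 2^a + 2^a = 2^(a+1) := by rw [pow_succ]; omega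

lemma aux_sq_le (q : ℕ) : q^2 ≤ 2^(q+1) := by
  induction q with
  | zero => simp
  | succ q ih =>
    have h1 : q + 1 ≤ 2^q := Nat.lt_two_pow_self (n := q)
    have e1 : (q+1)^2 = q^2 + 2*q + 1 := by ring
    have e2 : 2^(q+1+1) = 2^q * 4 := by rw [pow_succ, pow_succ]; ring
    have e3 : 2^(q+1) = 2^q * 2 := by rw [pow_succ]
    omega

lemma aux_amgm (s q : ℕ) : (8*s+q)^2 ≤ 128*s^2 + 2*q^2 := by
  have h : (2:ℤ) * (8*(s:ℤ)) * q ≤ (8*(s:ℤ))^2 + (q:ℤ)^2 := two_mul_le_add_sq _ _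
  have : ((8*s+q)^2 : ℤ) ≤ ((128*s^2 + 2*q^2 : ℕ) : ℤ) := by push_cast; nlinarith
  exact_mod_cast this

lemma aux_cube (s : ℕ) (hs : 2 ≤ s) : 128 * s^3 ≤ 2^(7*s-4) := by
  obtain ⟨t, rfl⟩ : ∃ t, s = t + 2 := ⟨s - 2, by omega⟩
  have h1 : t + 2 ≤ 2^(t+1) := by
    have := Nat.lt_two_pow_self (n := t)
    rw [pow_succ]; omega
  have h2 : (t+2)^3 ≤ (2^(t+1))^3 := Nat.pow_le_pow_left h1 3
  have h3 : (2^(t+1))^3 = 2^(3*t+3) := by rw [← pow_mul]; ring_nf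
  have h4 : (128:ℕ) * 2^(3*t+3) = 2^(3*t+10) := by
    have : (128:ℕ) = 2^7 := by norm_num
    rw [this, ← pow_add]; ring_nf
  have h5 : 2^(3*t+10) ≤ 2^(7*(t+2)-4) := Nat.pow_le_pow_right (by norm_num) (by omega)
  calc 128 * (t+2)^3 ≤ 128 * 2^(3*t+3) := by omega
    _ = 2^(3*t+10) := h4
    _ ≤ 2^(7*(t+2)-4) := h5

lemma aux_exp (n s : ℕ) (hs : 2 ≤ s) (hsn : 8*s ≤ n) :
    n^2 * s + n * 2^s ≤ 2^(n-s-2) := by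
  obtain ⟨q, rfl⟩ : ∃ q, n = 8*s + q := ⟨n - 8*s, by omega⟩
  have hd : 8*s + q - s - 2 = 7*s + q - 2 := by omega
  rw [hd]
  have hsp : s ≤ 2^s := aux_two_pow s
  have hqp : q^2 ≤ 2^(q+1) := aux_sq_le q
  have hq2 : q ≤ 2^q := aux_two_pow q
  -- first term
  have e2 : (8*s+q)^2 * s ≤ 128*s^3 + 2*q^2*s := by
    have := aux_amgm s q
    have h := Nat.mul_le_mul_right s this
    calc (8*s+q)^2 * s ≤ (128*s^2 + 2*q^2) * s := h
      _ = 128*s^3 + 2*q^2*s := by ring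
  have e3 : 128*s^3 ≤ 2^(7*s+q-4) :=
    le_trans (aux_cube s hs) (Nat.pow_le_pow_right (by norm_num) (by omega))
  have e4 : 2*q^2*s ≤ 2^(7*s+q-4) := by
    have h := Nat.mul_le_mul (Nat.mul_le_mul_left 2 hqp) hsp
    have h2 : 2 * 2^(q+1) * 2^s = 2^(q+s+2) := by ring
    have h3 : 2^(q+s+2) ≤ 2^(7*s+q-4) := Nat.pow_le_pow_right (by norm_num) (by omega)
    calc 2*q^2*s ≤ 2*2^(q+1)*2^s := h
      _ = 2^(q+s+2) := h2
      _ ≤ 2^(7*s+q-4) := h3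
  have h1 : (8*s+q)^2 * s ≤ 2^(7*s+q-3) := by
    have hp : 2^(7*s+q-4) + 2^(7*s+q-4) = 2^(7*s+q-3) := by
      rw [aux_pow_add2, show 7*s+q-4+1 = 7*s+q-3 by omega]
    omega
  -- second term
  have f1 : 8*s + q ≤ 2^(s+3) + 2^q := by
    have h : 8*s ≤ 2^(s+3) := by
      have : (8:ℕ)*2^s = 2^(s+3) := by rw [pow_add]; ring
      omega
    omega
  have f2 : (8*s+q)*2^s ≤ 2^(2*s+3) + 2^(q+s) := by
    have h := Nat.mul_le_mul_right (2^s) f1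
    have h2 : (2^(s+3) + 2^q)*2^s = 2^(2*s+3) + 2^(q+s) := by
      rw [add_mul, ← pow_add, ← pow_add]; ring_nf
    omega
  have f3 : 2^(2*s+3) ≤ 2^(7*s+q-4) := Nat.pow_le_pow_right (by norm_num) (by omega)
  have f4 : 2^(q+s) ≤ 2^(7*s+q-4) := Nat.pow_le_pow_right (by norm_num) (by omega)
  have h2 : (8*s+q) * 2^s ≤ 2^(7*s+q-3) := by
    have hp : 2^(7*s+q-4) + 2^(7*s+q-4) = 2^(7*s+q-3) := by
      rw [aux_pow_add2, show 7*s+q-4+1 = 7*s+q-3 by omega]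
    omega
  have hp : 2^(7*s+q-3) + 2^(7*s+q-3) = 2^(7*s+q-2) := by
    rw [aux_pow_add2, show 7*s+q-3+1 = 7*s+q-2 by omega]
  omega

lemma aux_fact (a b : ℕ) : a.factorial * a^b ≤ (a+b).factorial := by
  induction b with
  | zero => simp
  | succ b ih =>
    have h0 : (a+(b+1)).factorial = (a+b+1) * (a+b).factorial := by
      rw [show a+(b+1) = (a+b)+1 by ring, Nat.factorial_succ]
    rw [h0, pow_succ]
    calc a.factorial * (a^b * a) = (a.factorial * a^b) * a := by ring
      _ ≤ (a+b).factorial * a := Nat.mul_le_mul_right _ ih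
      _ ≤ (a+b).factorial * (a+b+1) := Nat.mul_le_mul_left _ (by omega)
      _ = (a+b+1) * (a+b).factorial := by ring

-- |I| < m!  where m = 2^(n-s-1)
lemma aux_I_lt_fact (n s : ℕ) (hs : 2 ≤ s) (hsn : 8*s ≤ n) :
    (n^s)^n * (2^(2^s))^n < (2^(n-s-1)).factorial := by
  set d := n - s - 2 with hd
  have hd12 : 12 ≤ d := by omega
  have hm : 2^(n-s-1) = 2^d + 2^d := by
    rw [aux_pow_add2, show d+1 = n-s-1 by omega]
  have hfact : (2^d)^(2^d) ≤ (2^(n-s-1)).factorial := by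
    rw [hm]
    have h1 : (2^d)^(2^d) ≤ (2^d).factorial * (2^d)^(2^d) :=
      Nat.le_mul_of_pos_left _ (Nat.factorial_pos _)
    exact le_trans h1 (aux_fact _ _)
  have h1 : (n^s)^n ≤ 2^(n^2*s) := by
    have a1 : (n^s)^n ≤ ((2^n)^s)^n :=
      Nat.pow_le_pow_left (Nat.pow_le_pow_left (aux_two_pow n) s) n
    have a2 : ((2^n)^s)^n = 2^(n^2*s) := by rw [← pow_mul, ← pow_mul]; ring_nf
    omega
  have h2 : (2^(2^s))^n = 2^(n*2^s) := by rw [← pow_mul]; ring_nf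
  have hI : (n^s)^n * (2^(2^s))^n ≤ 2^(n^2*s + n*2^s) := by
    rw [h2, pow_add]
    exact Nat.mul_le_mul_right _ h1
  have hexp : n^2*s + n*2^s ≤ 2^d := aux_exp n s hs hsn
  have hstrict : 2^(2^d) < (2^d)^(2^d) := by
    apply Nat.pow_lt_pow_left _ (by positivity)
    calc (2:ℕ) = 2^1 := rfl
      _ < 2^d := Nat.pow_lt_pow_right (by norm_num) (by omega)
  calc (n^s)^n * (2^(2^s))^n ≤ 2^(n^2*s + n*2^s) := hI
    _ ≤ 2^(2^d) := Nat.pow_le_pow_right (by norm_num) hexp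
    _ < (2^d)^(2^d) := hstrict
    _ ≤ _ := hfact


lemma exists_good (n s : ℕ) (hs : 2 ≤ s) (hsn : 8*s ≤ n)
    (hIlt : (n^s)^n * (2^(2^s))^n < (2^(n-s-1)).factorial) :
    ∃ f : (Fin n → Bool) → Fin n → Bool,
      ∀ (ρ : Fin n → Fin s → Fin n) (T : Fin n → (Fin s → Bool) → Bool),
        (Finset.univ.filter (fun x : Fin n → Bool =>
          f x = fun i => T i (fun k => x (ρ i k)))).card < 2^(n-s-1) := by
  classical
  set D := (Fin n → Bool) with hD
  set m := 2^(n-s-1) with hm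
  by_contra hcon
  push_neg at hcon
  set I := (Fin n → Fin s → Fin n) × (Fin n → (Fin s → Bool) → Bool) with hI
  set Φ : I → (D → Fin n → Bool) := fun p x => fun i => p.2 i (fun k => x (p.1 i k)) with hΦ
  set Bad : Finset (D → Fin n → Bool) :=
    (Finset.univ : Finset I).biUnion (fun p =>
      ((Finset.univ : Finset D).powersetCard m).biUnion (fun A =>
        Finset.univ.filter (fun f : D → Fin n → Bool => ∀ x ∈ A, f x = Φ p x))) with hBad
  have hcardD : Fintype.card D = 2^n := by
    simp [hD, Fintype.card_fun]
  -- univ ⊆ Bad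
  have hsub : (Finset.univ : Finset (D → Fin n → Bool)) ⊆ Bad := by
    intro f _
    obtain ⟨ρ, T, hfT⟩ := hcon f
    obtain ⟨A, hA, hAcard⟩ := Finset.exists_subset_card_eq hfT
    rw [hBad, Finset.mem_biUnion]
    refine ⟨(ρ, T), Finset.mem_univ _, ?_⟩
    rw [Finset.mem_biUnion]
    refine ⟨A, Finset.mem_powersetCard.2 ⟨Finset.subset_univ _, hAcard⟩, ?_⟩
    rw [Finset.mem_filter]
    refine ⟨Finset.mem_univ _, fun x hx => ?_⟩
    have := hA hx
    rw [Finset.mem_filter] at this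
    exact this.2
  -- each inner filter is small
  have hinner : ∀ (p : I) (A : Finset D), A ∈ (Finset.univ : Finset D).powersetCard m →
      (Finset.univ.filter (fun f : D → Fin n → Bool => ∀ x ∈ A, f x = Φ p x)).card
        ≤ (2^n)^(2^n - m) := by
    intro p A hA
    have hAcard : A.card = m := (Finset.mem_powersetCard.1 hA).2
    have hkey : (Finset.univ.filter (fun f : D → Fin n → Bool => ∀ x ∈ A, f x = Φ p x)).card
        ≤ (Finset.univ : Finset ({x : D // x ∉ A} → Fin n → Bool)).card := by
      apply Finset.card_le_card_of_injOn (fun f => fun x => f x.1)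
      · intro f _; exact Finset.mem_univ _
      · intro f hf g hg hfg
        simp only [Finset.coe_filter, Set.mem_setOf_eq] at hf hg
        funext x
        by_cases hx : x ∈ A
        · rw [hf.2 x hx, hg.2 x hx]
        · exact congrFun hfg ⟨x, hx⟩
    have hcard2 : (Finset.univ : Finset ({x : D // x ∉ A} → Fin n → Bool)).card
        = (2^n)^(2^n - m) := by
      rw [Finset.card_univ, Fintype.card_fun]
      have h1 : Fintype.card {x : D // x ∉ A} = Fintype.card D - Fintype.card {x : D // x ∈ A} :=
        Fintype.card_subtype_compl _
      have h2 : Fintype.card {x : D // x ∈ A} = A.card := Fintype.card_coe A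
      have h3 : Fintype.card (Fin n → Bool) = 2^n := by simp [Fintype.card_fun]
      rw [h1, h2, h3, hAcard]
    rw [← hcard2]; exact hkey
  -- card bound
  have hBadcard : Bad.card ≤ Fintype.card I * ((2^n).choose m * (2^n)^(2^n - m)) := by
    rw [hBad]
    refine le_trans Finset.card_biUnion_le ?_
    have hp : ∀ p : I,
        (((Finset.univ : Finset D).powersetCard m).biUnion (fun A =>
          Finset.univ.filter (fun f : D → Fin n → Bool => ∀ x ∈ A, f x = Φ p x))).card
          ≤ (2^n).choose m * (2^n)^(2^n - m) := by
      intro p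
      refine le_trans Finset.card_biUnion_le ?_
      refine le_trans (Finset.sum_le_sum (fun A hA => hinner p A hA)) ?_
      rw [Finset.sum_const, smul_eq_mul, Finset.card_powersetCard, Finset.card_univ, hcardD]
    refine le_trans (Finset.sum_le_sum (fun p _ => hp p)) ?_
    rw [Finset.sum_const, smul_eq_mul, Finset.card_univ]
  -- numeric contradiction
  have hcardI : Fintype.card I = (n^s)^n * (2^(2^s))^n := by
    show Fintype.card ((Fin n → Fin s → Fin n) × (Fin n → (Fin s → Bool) → Bool))
      = (n^s)^n * (2^(2^s))^n
    simp [Fintype.card_prod, Fintype.card_fun]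
  have hchoose : (2^n).choose m * m.factorial ≤ (2^n)^m := by
    rw [Nat.choose_eq_descFactorial_div_factorial,
      Nat.div_mul_cancel (Nat.factorial_dvd_descFactorial _ _)]
    exact Nat.descFactorial_le_pow _ _
  have hXlt : Fintype.card I * (2^n).choose m < (2^n)^m := by
    have h1 : Fintype.card I * (2^n).choose m * m.factorial
        ≤ Fintype.card I * (2^n)^m := by
      calc Fintype.card I * (2^n).choose m * m.factorial
          = Fintype.card I * ((2^n).choose m * m.factorial) := by ring
        _ ≤ Fintype.card I * (2^n)^m := Nat.mul_le_mul_left _ hchoose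
    have h2 : Fintype.card I * (2^n)^m < m.factorial * (2^n)^m := by
      refine (Nat.mul_lt_mul_right (by positivity)).2 ?_
      rw [hcardI]; exact hIlt
    have h3 : Fintype.card I * (2^n).choose m * m.factorial < (2^n)^m * m.factorial := by
      calc Fintype.card I * (2^n).choose m * m.factorial ≤ Fintype.card I * (2^n)^m := h1
        _ < m.factorial * (2^n)^m := h2
        _ = (2^n)^m * m.factorial := by ring
    exact (Nat.mul_lt_mul_right (Nat.factorial_pos m)).1 h3
  have hmN : m ≤ 2^n := by
    rw [hm]; exact Nat.pow_le_pow_right (by norm_num) (by omega)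
  have hfinal : Fintype.card I * ((2^n).choose m * (2^n)^(2^n - m)) < (2^n)^(2^n) := by
    calc Fintype.card I * ((2^n).choose m * (2^n)^(2^n - m))
        = (Fintype.card I * (2^n).choose m) * (2^n)^(2^n - m) := by ring
      _ < (2^n)^m * (2^n)^(2^n - m) := (Nat.mul_lt_mul_right (by positivity)).2 hXlt
      _ = (2^n)^(2^n) := by rw [← pow_add]; congr 1; omega
  have huniv : (Finset.univ : Finset (D → Fin n → Bool)).card = (2^n)^(2^n) := by
    rw [Finset.card_univ, Fintype.card_fun, hcardD]
  have := Finset.card_le_card hsub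
  omega

/-- `f : {0,1}^n → {0,1}^n` is an `(r, s)`-rigid function: for every subset `X` of size at
least `2^(n-r)`, every choice of subsets `S₁, …, Sₙ ⊆ [n]` of size (at most) `s`, and every
choice of functions `g₁, …, gₙ` where `gᵢ` depends only on the coordinates in `Sᵢ`, there is
`x ∈ X` with `f x ≠ (g₁(x|_{S₁}), …, gₙ(x|_{Sₙ}))`. -/
def IsRigidFunc (n : ℕ) (f : (Fin n → Bool) → Fin n → Bool) (r s : ℝ) : Prop :=
  ∀ X : Finset (Fin n → Bool), (2 : ℝ) ^ ((n : ℝ) - r) ≤ X.card →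
    ∀ S : Fin n → Finset (Fin n), (∀ i, ((S i).card : ℝ) ≤ s) →
      ∀ g : Fin n → (Fin n → Bool) → Bool,
        (∀ i x y, (∀ j ∈ S i, x j = y j) → g i x = g i y) →
        ∃ x ∈ X, f x ≠ fun i => g i x


theorem stmt_3 (ε : ℝ) (hε : 0 < ε) (hε' : ε ≤ 1 / 8) (n : ℕ) (hn : 2 / ε ≤ n) :
    ∃ f : (Fin n → Bool) → Fin n → Bool, IsRigidFunc n f (ε * n) (ε * n) := by
  classical
  have hn2 : 2 ≤ ε * n := by
    rw [div_le_iff₀ hε] at hn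
    nlinarith
  set s := ⌊ε * n⌋₊ with hsdef
  have hs2 : 2 ≤ s := Nat.le_floor (by exact_mod_cast hn2)
  have hfloor_le : (s:ℝ) ≤ ε * n := Nat.floor_le (by positivity)
  have h8s : 8 * s ≤ n := by
    have hn0 : (0:ℝ) ≤ (n:ℝ) := Nat.cast_nonneg n
    have : ((8*s : ℕ) : ℝ) ≤ (n:ℝ) := by push_cast; nlinarith
    exact_mod_cast this
  have hn16 : 16 ≤ n := by omega
  obtain ⟨f, hf⟩ := exists_good n s hs2 h8s (aux_I_lt_fact n s hs2 h8s)
  refine ⟨f, ?_⟩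
  intro X hX S hS g hg
  -- m ≤ X.card
  have hm_le : 2^(n-s-1) ≤ X.card := by
    have hcast : ((n - s - 1 : ℕ) : ℝ) = (n:ℝ) - s - 1 := by
      have h1 : s + 1 ≤ n := by omega
      have h2 : n - s - 1 = n - (s+1) := by omega
      rw [h2, Nat.cast_sub h1]
      push_cast; ring
    have h1 : ((2^(n-s-1) : ℕ) : ℝ) ≤ (2:ℝ)^((n:ℝ) - ε*n) := by
      push_cast
      rw [← Real.rpow_natCast 2 (n-s-1)]
      apply Real.rpow_le_rpow_of_exponent_le one_le_two
      rw [hcast]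
      have := Nat.lt_floor_add_one (ε * n)
      linarith
    have h2 := le_trans h1 hX
    exact_mod_cast h2
  -- build ρ and T
  have hScard : ∀ i, (S i).card ≤ s := fun i => Nat.le_floor (hS i)
  have hρT : ∃ (ρ : Fin n → Fin s → Fin n) (T : Fin n → (Fin s → Bool) → Bool),
      ∀ (x : Fin n → Bool) (i : Fin n), g i x = T i (fun k => x (ρ i k)) := by
    have hdflt : 0 < n := by omega
    set dflt : Fin n := ⟨0, hdflt⟩ with hd
    set ρ : Fin n → Fin s → Fin n := fun i k => (S i).toList.getD k dflt with hρ
    have hcover : ∀ i, ∀ a ∈ S i, ∃ k : Fin s, ρ i k = a := by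
      intro i a ha
      have hmem : a ∈ (S i).toList := Finset.mem_toList.2 ha
      obtain ⟨idx, hidx, hget⟩ := List.mem_iff_getElem.1 hmem
      have hlen : (S i).toList.length ≤ s := by
        rw [Finset.length_toList]; exact hScard i
      refine ⟨⟨idx, lt_of_lt_of_le hidx hlen⟩, ?_⟩
      show (S i).toList.getD idx dflt = a
      rw [List.getD_eq_getElem _ _ hidx]
      exact hget
    refine ⟨ρ, fun i t =>
      g i (fun j => if h : ∃ k : Fin s, ρ i k = j then t h.choose else false), ?_⟩
    intro x i
    apply hg i
    intro j hj
    have hex : ∃ k : Fin s, ρ i k = j := hcover i j hj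
    rw [dif_pos hex]
    show x j = x (ρ i hex.choose)
    rw [hex.choose_spec]
  obtain ⟨ρ, T, hclaim⟩ := hρT
  -- conclude
  have hlt := hf ρ T
  have hnsub : ¬ X ⊆ Finset.univ.filter (fun x : Fin n → Bool =>
      f x = fun i => T i (fun k => x (ρ i k))) := by
    intro hsub
    have h := Finset.card_le_card hsub
    exact absurd hlt (not_lt.2 (le_trans hm_le h))
  obtain ⟨x, hxX, hxA⟩ := Finset.not_subset.1 hnsub
  refine ⟨x, hxX, ?_⟩
  intro heq
  apply hxA
  rw [Finset.mem_filter]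
  refine ⟨Finset.mem_univ _, ?_⟩
  rw [heq]
  funext i
  exact hclaim x i
end

section
/- For every n ≥ 2/ε with 0 < ε ≤ 1/8, the number of functions f : {0,1}^n → {0,1}^n that are not (εn, εn)-rigid functions is strictly less than 2^{n·2^n}, the total number of such functions; moreover, this count is at most (2^{(n/4)·2^{n−εn}})^3 · 2^{n·2^n − n·2^{n−εn}}. -/
open Finset Real

/-- Encoding space for non-rigid functions. -/
abbrev RigT (n m k : ℕ) : Type :=
  (Σ X : {X : Finset (Fin n → Bool) // X.card = m},
      ({x : Fin n → Bool // x ∉ X.1} → Fin n → Bool)) ×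
    (Fin n → {s : Finset (Fin n) // s.card = k}) ×
    (Fin n → (Fin k → Bool) → Bool)

def rigDecode (n m k : ℕ) (t : RigT n m k) :
    (Fin n → Bool) → Fin n → Bool := fun x =>
  if h : x ∈ t.1.1.1 then
    fun i => t.2.2 i fun j => x (Finset.orderEmbOfFin (t.2.1 i).1 (t.2.1 i).2 j)
  else t.1.2 ⟨x, h⟩

lemma rig_surj (n m k : ℕ) (r s : ℝ) (hkn : k ≤ n)
    (hm : ∀ c : ℕ, (2 : ℝ) ^ ((n : ℝ) - r) ≤ c → m ≤ c)
    (hk : ∀ c : ℕ, (c : ℝ) ≤ s → c ≤ k)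
    (f : (Fin n → Bool) → Fin n → Bool) (hf : ¬ IsRigidFunc n f r s) :
    ∃ t : RigT n m k, rigDecode n m k t = f := by
  unfold IsRigidFunc at hf
  push_neg at hf
  obtain ⟨X, hX, S, hS, g, hg, hfg⟩ := hf
  obtain ⟨X', hX'sub, hX'card⟩ := Finset.exists_subset_card_eq (hm X.card hX)
  have hext : ∀ i, ∃ s' : Finset (Fin n), S i ⊆ s' ∧ s'.card = k := fun i =>
    Finset.exists_superset_card_eq (hk _ (hS i)) (by simpa using hkn)
  choose S' hS'sub hS'card using hext
  refine ⟨⟨⟨⟨X', hX'card⟩, fun x => f x.1⟩, fun i => ⟨S' i, hS'card i⟩,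
    fun i z => g i fun j => if h : j ∈ S' i then
      z (((S' i).orderIsoOfFin (hS'card i)).symm ⟨j, h⟩) else false⟩, ?_⟩
  funext x
  by_cases hx : x ∈ X'
  · have hfx := hfg x (hX'sub hx)
    simp only [rigDecode, dif_pos hx]
    rw [hfx]
    funext i
    refine hg i _ x fun j hj => ?_
    have hj' : j ∈ S' i := hS'sub i hj
    simp only [dif_pos hj']
    rw [← Finset.coe_orderIsoOfFin_apply]
    simp
  · simp only [rigDecode, dif_neg hx]

lemma card_RigT (n m k : ℕ) :
    Nat.card (RigT n m k) =
      ((2 ^ n).choose m * (2 ^ n) ^ (2 ^ n - m)) * ((n.choose k) ^ n * (2 ^ 2 ^ k) ^ n) := by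
  rw [Nat.card_eq_fintype_card]
  rw [Fintype.card_prod, Fintype.card_prod, Fintype.card_sigma]
  have h1 : ∀ X : {X : Finset (Fin n → Bool) // X.card = m},
      Fintype.card ({x : Fin n → Bool // x ∉ X.1} → Fin n → Bool)
        = (2 ^ n) ^ (2 ^ n - m) := by
    intro X
    rw [Fintype.card_fun]
    congr 1
    · simp [Fintype.card_fun]
    · have := Fintype.card_subtype_compl (fun x : Fin n → Bool => x ∈ X.1)
      simp only [this]
      simp [X.2]
  simp only [h1, Finset.sum_const, smul_eq_mul]
  have h2 : Fintype.card {X : Finset (Fin n → Bool) // X.card = m} = (2 ^ n).choose m := by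
    rw [Fintype.card_finset_len]
    simp
  have h3 : Fintype.card {s : Finset (Fin n) // s.card = k} = n.choose k := by
    rw [Fintype.card_finset_len]; simp
  have h4 : Fintype.card ((Fin k → Bool) → Bool) = 2 ^ 2 ^ k := by simp
  simp only [Fintype.card_fun, h3, h4]
  rw [Fintype.card_fin, ← h2, Fintype.card]

lemma aux32 (A : ℝ) (hA : 16 ≤ A) : 32 * A ≤ (2 : ℝ) ^ ((7 / 8) * A) := by
  have h7 : (2 : ℝ) ^ ((7 / 8) * A) = 2 ^ (7 : ℝ) * 2 ^ ((7 / 8) * A - 7) := by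
    rw [← Real.rpow_add two_pos]; ring_nf
  have h27 : (2 : ℝ) ^ (7 : ℝ) = 128 := by
    rw [show (7 : ℝ) = ((7 : ℕ) : ℝ) by norm_num, Real.rpow_natCast]; norm_num
  have hdef : (2 : ℝ) ^ ((7 / 8) * A - 7) = Real.exp (Real.log 2 * ((7 / 8) * A - 7)) := by
    rw [Real.rpow_def_of_pos two_pos]
  have hexp : Real.log 2 * ((7 / 8) * A - 7) + 1 ≤ Real.exp (Real.log 2 * ((7 / 8) * A - 7)) :=
    Real.add_one_le_exp _
  have hlog : (0.6931471803 : ℝ) < Real.log 2 := Real.log_two_gt_d9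
  have ht : (7 : ℝ) ≤ (7 / 8) * A - 7 := by linarith
  have hmul : (0.6931471803 : ℝ) * ((7 / 8) * A - 7) ≤ Real.log 2 * ((7 / 8) * A - 7) :=
    mul_le_mul_of_nonneg_right hlog.le (by linarith)
  rw [h7, h27, hdef]
  nlinarith [hexp, hmul]

lemma exp_le_rpow : Real.exp 1 ≤ (2 : ℝ) ^ ((3 : ℝ) / 2) := by
  have hpos : (0 : ℝ) < (2 : ℝ) ^ ((3 : ℝ) / 2) := Real.rpow_pos_of_pos two_pos _
  have hsq : ((2 : ℝ) ^ ((3 : ℝ) / 2)) ^ (2 : ℕ) = 8 := by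
    rw [← Real.rpow_natCast ((2:ℝ) ^ ((3:ℝ)/2)) 2, ← Real.rpow_mul (by norm_num : (0:ℝ) ≤ 2)]
    norm_num
  have he : Real.exp 1 < 2.7182818286 := Real.exp_one_lt_d9
  nlinarith [Real.exp_pos 1]

lemma choose_le (N m : ℕ) (hm : 1 ≤ m) :
    ((N.choose m : ℝ)) ≤ ((N : ℝ) * Real.exp 1 / m) ^ m := by
  have hfac : (0 : ℝ) < (m.factorial : ℝ) := by positivity
  have hmpos : (0 : ℝ) < (m : ℝ) := by exact_mod_cast hm
  have h1 : (N.choose m : ℝ) * m.factorial ≤ (N : ℝ) ^ m := by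
    have := Nat.descFactorial_le_pow N m
    rw [Nat.descFactorial_eq_factorial_mul_choose] at this
    calc (N.choose m : ℝ) * m.factorial = ((m.factorial * N.choose m : ℕ) : ℝ) := by push_cast; ring
      _ ≤ ((N ^ m : ℕ) : ℝ) := by exact_mod_cast this
      _ = (N : ℝ) ^ m := by push_cast; ring
  have h2 : ((m : ℝ)) ^ m ≤ Real.exp 1 ^ m * m.factorial := by
    have hsum : ((m : ℝ)) ^ m / m.factorial ≤ Real.exp m := by
      have := Real.sum_le_exp_of_nonneg (x := (m : ℝ)) (by positivity) (m + 1)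
      refine le_trans ?_ this
      refine Finset.single_le_sum (f := fun i => (m : ℝ) ^ i / i.factorial) ?_ ?_
      · intro i _; positivity
      · simp
    rw [div_le_iff₀ hfac] at hsum
    have hee : Real.exp ((m:ℕ) : ℝ) = Real.exp 1 ^ m := by
      rw [← Real.exp_nat_mul]; norm_num
    calc ((m:ℝ))^m ≤ Real.exp ((m:ℕ):ℝ) * m.factorial := hsum
      _ = Real.exp 1 ^ m * m.factorial := by rw [hee]
  calc (N.choose m : ℝ) ≤ (N : ℝ) ^ m / m.factorial := by rw [le_div_iff₀ hfac]; exact h1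
    _ ≤ (N : ℝ) ^ m * (Real.exp 1 ^ m / (m : ℝ) ^ m) := by
        have h3 : (1:ℝ)/m.factorial ≤ Real.exp 1 ^ m / (m:ℝ)^m := by
          rw [div_le_div_iff₀ hfac (by positivity)]
          rw [one_mul]; exact h2
        have h4 := mul_le_mul_of_nonneg_left h3 (show (0:ℝ) ≤ (N:ℝ)^m by positivity)
        calc (N:ℝ)^m / m.factorial = (N:ℝ)^m * (1/m.factorial) := by ring
          _ ≤ _ := h4
    _ = ((N : ℝ) * Real.exp 1 / m) ^ m := by rw [div_pow, mul_pow]; ring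

set_option maxHeartbeats 1000000 in
theorem stmt_17 (ε : ℝ) (hε : 0 < ε) (hε' : ε ≤ 1 / 8) (n : ℕ) (hn : 2 / ε ≤ n) :
    (Nat.card {f : (Fin n → Bool) → Fin n → Bool // ¬ IsRigidFunc n f (ε * n) (ε * n)} : ℝ)
        ≤ ((2 : ℝ) ^ (((n : ℝ) / 4) * (2 : ℝ) ^ ((n : ℝ) - ε * n))) ^ 3 *
          (2 : ℝ) ^ ((n : ℝ) * (2 : ℝ) ^ (n : ℝ) - (n : ℝ) * (2 : ℝ) ^ ((n : ℝ) - ε * n)) ∧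
    (Nat.card {f : (Fin n → Bool) → Fin n → Bool // ¬ IsRigidFunc n f (ε * n) (ε * n)} : ℝ)
        < (2 : ℝ) ^ ((n : ℝ) * (2 : ℝ) ^ (n : ℝ)) := by
  have hA16 : (16 : ℝ) ≤ (n : ℝ) := by
    have h1 : (16 : ℝ) ≤ 2 / ε := by rw [le_div_iff₀ hε]; nlinarith
    linarith
  have hApos : (0 : ℝ) < n := by linarith
  have hE2 : (2 : ℝ) ≤ ε * n := by
    rw [div_le_iff₀ hε] at hn; linarith
  have hE8 : ε * n ≤ (n : ℝ) / 8 := by nlinarith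
  set A : ℝ := (n : ℝ) with hA
  set a : ℝ := (2 : ℝ) ^ (A - ε * A) with ha
  have hapos : 0 < a := Real.rpow_pos_of_pos two_pos _
  have ha1 : (1 : ℝ) ≤ a := by
    have := Real.rpow_le_rpow_of_exponent_le one_le_two (show (0:ℝ) ≤ A - ε * A by linarith)
    rwa [Real.rpow_zero] at this
  have ha32 : 32 * A ≤ a := by
    have h78 : (2:ℝ) ^ ((7/8) * A) ≤ a :=
      Real.rpow_le_rpow_of_exponent_le one_le_two (by nlinarith)
    have := aux32 A hA16
    linarith
  set m : ℕ := ⌈a⌉₊ with hm_def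
  set k : ℕ := ⌊ε * A⌋₊ with hk_def
  clear_value m k a A
  have hma : a ≤ (m : ℝ) := by rw [hm_def]; exact Nat.le_ceil a
  have hma1 : (m : ℝ) ≤ a + 1 := by rw [hm_def]; exact (Nat.ceil_lt_add_one hapos.le).le
  have hm1 : 1 ≤ m := by
    have : (1:ℝ) ≤ (m:ℝ) := le_trans ha1 hma
    exact_mod_cast this
  have h2A : ((2 ^ n : ℕ) : ℝ) = (2 : ℝ) ^ A := by
    rw [hA]
    push_cast
    rw [← Real.rpow_natCast 2 n]
  have hm2n : m ≤ 2 ^ n := by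
    rw [hm_def, Nat.ceil_le, h2A, ha]
    exact Real.rpow_le_rpow_of_exponent_le one_le_two (by nlinarith)
  have hkE : (k : ℝ) ≤ ε * A := by
    rw [hk_def]
    exact Nat.floor_le (by nlinarith)
  have hkn : k ≤ n := by
    have : (k : ℝ) ≤ (n : ℝ) := le_trans hkE (by nlinarith)
    exact_mod_cast this
  -- the cardinality bound
  have hm_hyp : ∀ c : ℕ, (2 : ℝ) ^ ((n : ℝ) - ε * n) ≤ c → m ≤ c := by
    intro c hc
    rw [hm_def, Nat.ceil_le, ha, hA]
    exact hc
  have hk_hyp : ∀ c : ℕ, (c : ℝ) ≤ ε * (n : ℝ) → c ≤ k := by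
    intro c hc
    rw [hk_def]
    exact Nat.le_floor (by rw [hA]; exact hc)
  have key : ∀ fp : {f : (Fin n → Bool) → Fin n → Bool // ¬ IsRigidFunc n f (ε * n) (ε * n)},
      ∃ t : RigT n m k, rigDecode n m k t = fp.1 := fun fp =>
    rig_surj n m k (ε * n) (ε * n) hkn hm_hyp hk_hyp fp.1 fp.2
  have hcard : Nat.card {f : (Fin n → Bool) → Fin n → Bool // ¬ IsRigidFunc n f (ε * n) (ε * n)}
      ≤ Nat.card (RigT n m k) := by
    apply Nat.card_le_card_of_injective (fun fp => (key fp).choose)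
    intro x y hxy
    have hx := (key x).choose_spec
    have hy := (key y).choose_spec
    apply Subtype.ext
    rw [← hx, ← hy]
    exact congrArg (rigDecode n m k) hxy
  -- the four factor bounds
  have hmposR : (0:ℝ) < (m:ℝ) := by exact_mod_cast hm1
  have hF1 : (((2 ^ n).choose m : ℕ) : ℝ) ≤ (2:ℝ) ^ ((A/4) * a) := by
    have hdiv : ((2 ^ n : ℕ):ℝ) / m ≤ (2:ℝ) ^ (ε * A) := by
      rw [div_le_iff₀ hmposR]
      have hsplit : (2:ℝ) ^ (ε * A) * a = (2:ℝ) ^ A := by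
        rw [ha, ← Real.rpow_add two_pos]; ring_nf
      have hpos := Real.rpow_pos_of_pos two_pos (ε * A)
      calc ((2 ^ n : ℕ):ℝ) = (2:ℝ) ^ A := h2A
        _ = (2:ℝ) ^ (ε * A) * a := hsplit.symm
        _ ≤ (2:ℝ) ^ (ε * A) * m := by nlinarith
    have hq : ((2 ^ n : ℕ):ℝ) * Real.exp 1 / m ≤ (2:ℝ) ^ (ε * A + 3/2) := by
      calc ((2 ^ n : ℕ):ℝ) * Real.exp 1 / m = (((2 ^ n : ℕ):ℝ) / m) * Real.exp 1 := by ring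
        _ ≤ (2:ℝ) ^ (ε * A) * (2:ℝ) ^ ((3:ℝ)/2) := by
            exact mul_le_mul hdiv exp_le_rpow (Real.exp_pos 1).le
              (Real.rpow_pos_of_pos two_pos _).le
        _ = (2:ℝ) ^ (ε * A + 3/2) := (Real.rpow_add two_pos _ _).symm
    calc (((2 ^ n).choose m : ℕ) : ℝ) ≤ (((2 ^ n : ℕ):ℝ) * Real.exp 1 / m) ^ m :=
          choose_le (2 ^ n) m hm1
      _ ≤ ((2:ℝ) ^ (ε * A + 3/2)) ^ m := pow_le_pow_left₀ (by positivity) hq m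
      _ = (2:ℝ) ^ ((ε * A + 3/2) * m) := by
          rw [← Real.rpow_natCast ((2:ℝ) ^ (ε * A + 3/2)) m, ← Real.rpow_mul two_pos.le]
      _ ≤ (2:ℝ) ^ ((A/4) * a) := by
          apply Real.rpow_le_rpow_of_exponent_le one_le_two
          have e1 : (ε * A + 3/2) * (m:ℝ) ≤ (A/8 + 3/2) * (a + 1) :=
            mul_le_mul (by linarith) hma1 (by positivity) (by linarith)
          have e3 : (A/8 + 3/2) * (a + 1) ≤ (A/4) * a := by
            nlinarith [mul_nonneg (sub_nonneg.2 hA16) (sub_nonneg.2 ha32),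
              mul_nonneg hApos.le (sub_nonneg.2 hA16)]
          linarith
  have hF2 : (((2 ^ n) ^ (2 ^ n - m) : ℕ) : ℝ) ≤ (2:ℝ) ^ (A * (2:ℝ) ^ A - A * a) := by
    have h1 : ((2 ^ n) ^ (2 ^ n - m) : ℕ) = 2 ^ (n * (2 ^ n - m)) := by rw [← pow_mul]
    rw [h1, show (((2:ℕ) ^ (n * (2 ^ n - m)) : ℕ) : ℝ) = (2:ℝ) ^ ((n * (2 ^ n - m) : ℕ) : ℝ) by
      rw [Real.rpow_natCast]; push_cast; ring]
    apply Real.rpow_le_rpow_of_exponent_le one_le_two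
    have hc : ((n * (2 ^ n - m) : ℕ) : ℝ) = A * (((2 ^ n : ℕ):ℝ) - m) := by
      rw [hA]; push_cast [Nat.cast_sub hm2n]; ring
    rw [hc, h2A]
    nlinarith [mul_le_mul_of_nonneg_left hma hApos.le]
  have hF3 : (((n.choose k) ^ n : ℕ) : ℝ) ≤ (2:ℝ) ^ ((A/4) * a) := by
    have hchoose : n.choose k ≤ 2 ^ n := by
      calc n.choose k ≤ ∑ i ∈ Finset.range (n+1), n.choose i :=
            Finset.single_le_sum (fun i _ => Nat.zero_le _)
              (Finset.mem_range.2 (Nat.lt_succ_of_le hkn))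
        _ = 2 ^ n := Nat.sum_range_choose n
    calc (((n.choose k) ^ n : ℕ) : ℝ) ≤ (((2 ^ n) ^ n : ℕ) : ℝ) := by
          exact_mod_cast Nat.pow_le_pow_left hchoose n
      _ = (2:ℝ) ^ ((n * n : ℕ) : ℝ) := by
          rw [← pow_mul, Real.rpow_natCast]; push_cast; ring
      _ ≤ (2:ℝ) ^ ((A/4) * a) := by
          apply Real.rpow_le_rpow_of_exponent_le one_le_two
          push_cast
          rw [← hA]
          nlinarith [mul_le_mul_of_nonneg_left ha32 (by linarith : (0:ℝ) ≤ A/4),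
            mul_pos hApos hApos]
  have hF4 : (((2 ^ 2 ^ k) ^ n : ℕ) : ℝ) ≤ (2:ℝ) ^ ((A/4) * a) := by
    have h4 : (2:ℝ) ^ (2:ℝ) = 4 := by
      rw [show (2:ℝ) = ((2:ℕ):ℝ) from by norm_num, Real.rpow_natCast]; norm_num
    have h2k : ((2 ^ k : ℕ) : ℝ) ≤ a / 4 := by
      have hh1 : ((2 ^ k : ℕ) : ℝ) = (2:ℝ) ^ ((k:ℕ) : ℝ) := by
        rw [Real.rpow_natCast]; push_cast; ring
      have hh2 : (2:ℝ) ^ ((k:ℝ)) ≤ (2:ℝ) ^ (A - ε * A - 2) :=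
        Real.rpow_le_rpow_of_exponent_le one_le_two (by linarith [hkE, hE8, hA16])
      have hh3 : (2:ℝ) ^ (A - ε * A - 2) = a / 4 := by
        rw [show A - ε * A - 2 = (A - ε * A) - 2 by ring, Real.rpow_sub two_pos, ha, h4]
      rw [hh1]; rw [hh3] at hh2; exact hh2
    have h1 : ((2 ^ 2 ^ k) ^ n : ℕ) = 2 ^ (2 ^ k * n) := by rw [← pow_mul]
    rw [h1, show (((2:ℕ) ^ (2 ^ k * n) : ℕ) : ℝ) = (2:ℝ) ^ ((2 ^ k * n : ℕ) : ℝ) by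
      rw [Real.rpow_natCast]; push_cast; ring]
    apply Real.rpow_le_rpow_of_exponent_le one_le_two
    have : ((2 ^ k * n : ℕ) : ℝ) = ((2 ^ k : ℕ):ℝ) * A := by rw [hA]; push_cast; ring
    rw [this]
    nlinarith [mul_le_mul_of_nonneg_right h2k hApos.le]
  -- assemble
  have hmain' : (Nat.card {f : (Fin n → Bool) → Fin n → Bool //
        ¬ IsRigidFunc n f (ε * n) (ε * n)} : ℝ)
      ≤ ((2 : ℝ) ^ ((A / 4) * a)) ^ 3 * (2 : ℝ) ^ (A * (2:ℝ) ^ A - A * a) := by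
    calc (Nat.card {f : (Fin n → Bool) → Fin n → Bool //
          ¬ IsRigidFunc n f (ε * n) (ε * n)} : ℝ)
        ≤ (Nat.card (RigT n m k) : ℝ) := by exact_mod_cast hcard
      _ = (((2 ^ n).choose m : ℕ) : ℝ) * (((2 ^ n) ^ (2 ^ n - m) : ℕ) : ℝ) *
            ((((n.choose k) ^ n : ℕ)) : ℝ) * (((2 ^ 2 ^ k) ^ n : ℕ) : ℝ) := by
          rw [card_RigT]; push_cast; ring
      _ ≤ (2:ℝ) ^ ((A/4) * a) * (2:ℝ) ^ (A * (2:ℝ) ^ A - A * a) *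
            (2:ℝ) ^ ((A/4) * a) * (2:ℝ) ^ ((A/4) * a) := by
          exact mul_le_mul (mul_le_mul (mul_le_mul hF1 hF2 (by positivity) (by positivity))
            hF3 (by positivity) (by positivity)) hF4 (by positivity) (by positivity)
      _ = ((2 : ℝ) ^ ((A / 4) * a)) ^ 3 * (2 : ℝ) ^ (A * (2:ℝ) ^ A - A * a) := by ring
  have hlt : ((2 : ℝ) ^ ((A / 4) * a)) ^ 3 * (2 : ℝ) ^ (A * (2:ℝ) ^ A - A * a)
      < (2:ℝ) ^ (A * (2:ℝ) ^ A) := by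
    have hEq : ((2 : ℝ) ^ ((A / 4) * a)) ^ 3 * (2 : ℝ) ^ (A * (2:ℝ) ^ A - A * a)
        = (2:ℝ) ^ ((A / 4) * a * 3 + (A * (2:ℝ) ^ A - A * a)) := by
      rw [← Real.rpow_natCast ((2:ℝ) ^ ((A / 4) * a)) 3, ← Real.rpow_mul two_pos.le,
        ← Real.rpow_add two_pos]
      norm_num
    rw [hEq]
    apply Real.rpow_lt_rpow_of_exponent_lt one_lt_two
    nlinarith [mul_pos hApos hapos]
  rw [ha, hA] at hmain' hlt ⊢
  exact ⟨hmain', lt_of_le_of_lt hmain' hlt⟩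
end
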